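/- If P = (V_0, …, V_{n-1}) is an ordinary quasi-convex polygon in ℝ² of dimension 2 (i.e., the affine hull of its vertex set has dimension 2) and V_1 is an extreme point of conv P, then the points V_0, V_1, V_2 are non-collinear. -/

import Mathlib

open Set

noncomputable section

/-- The Euclidean plane. -/
abbrev Pl := EuclideanSpace ℝ (Fin 2)

/-- The `j`-th vertex of the polygon given by the list `L`, with indices taken
cyclically (so that `V_n = V_0`). -/
def vtx (L : List Pl) (j : ℕ) : Pl := L.getD (j % L.length) 0

/-- The set of vertices of the polygon `L`. -/
def vertexSet (L : List Pl) : Set Pl := {x | x ∈ L}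

/-- The union of the edges `[V_i, V_{i+1}]`, `i = 0, …, n-1` (with `V_n = V_0`). -/
def edg (L : List Pl) : Set Pl :=
  ⋃ i ∈ Finset.range L.length, segment ℝ (vtx L i) (vtx L (i + 1))

/-- A polygon is convex if the union of its edges coincides with the boundary of
the convex hull of its vertex set. -/
def IsConvexPolygon (L : List Pl) : Prop :=
  edg L = frontier (convexHull ℝ (vertexSet L))

/-- A polygon is quasi-convex if the union of its edges is contained in the boundary
of the convex hull of its vertex set. -/
def IsQuasiConvex (L : List Pl) : Prop :=
  edg L ⊆ frontier (convexHull ℝ (vertexSet L))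

/-- A polygon is strict if any three of its vertices (with increasing indices)
are non-collinear. -/
def IsStrict (L : List Pl) : Prop :=
  ∀ i j k : ℕ, i < j → j < k → k < L.length →
    ¬ Collinear ℝ ({vtx L i, vtx L j, vtx L k} : Set Pl)

/-- The points of `S` lie to one side of the segment `[A, B]`: there is a line
(the zero set of `f · = c` with `f ≠ 0`) containing `A` and `B` which is the
boundary of a closed half-plane `{x | f x ≤ c}` containing `S`. -/
def OneSide (A B : Pl) (S : Set Pl) : Prop :=
  ∃ (f : Pl →ₗ[ℝ] ℝ) (c : ℝ), f ≠ 0 ∧ f A = c ∧ f B = c ∧ ∀ p ∈ S, f p ≤ c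

/-- `ℓ` is a line in the plane. -/
def IsLine (ℓ : Set Pl) : Prop :=
  ∃ (f : Pl →ₗ[ℝ] ℝ) (c : ℝ), f ≠ 0 ∧ ℓ = {x | f x = c}

/-- The line `ℓ` is supporting to the set `S`: it meets `S` and is the boundary of
a closed half-plane containing `S`. -/
def IsSuppLine (ℓ S : Set Pl) : Prop :=
  (ℓ ∩ S).Nonempty ∧
    ∃ (f : Pl →ₗ[ℝ] ℝ) (c : ℝ), f ≠ 0 ∧ ℓ = {x | f x = c} ∧ ∀ x ∈ S, f x ≤ c

/-- The half-open segment `[A, B) = {(1-t)A + tB : 0 ≤ t < 1}` if `A ≠ B`,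
and `∅` if `A = B`. -/
def hseg (A B : Pl) : Set Pl :=
  {x | A ≠ B ∧ ∃ t : ℝ, 0 ≤ t ∧ t < 1 ∧ x = (1 - t) • A + t • B}

/-- A 2-polytope: a compact convex subset of the plane of dimension 2 whose set of
extreme points is finite. -/
def IsPolytope2 (K : Set Pl) : Prop :=
  IsCompact K ∧ Convex ℝ K ∧
    Module.finrank ℝ (affineSpan ℝ K).direction = 2 ∧
    (Set.extremePoints ℝ K).Finite

/- ### auxiliary lemmas -/

lemma mem_interior_of_combo {K : Set Pl} (hK : Convex ℝ K) {u w y : Pl}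
    (hu : u ∈ K) (hw : w ∈ K) (hy : y ∈ K)
    (h : ¬ Collinear ℝ ({u, w, y} : Set Pl)) {a b c : ℝ}
    (ha : 0 < a) (hb : 0 < b) (hc : 0 < c) (habc : a + b + c = 1) :
    a • u + b • w + c • y ∈ interior K := by
  have hp : AffineIndependent ℝ ![u, w, y] := affineIndependent_iff_not_collinear_set.2 h
  have htop : affineSpan ℝ (Set.range ![u, w, y]) = ⊤ :=
    hp.affineSpan_eq_top_iff_card_eq_finrank_add_one.mpr (by simp)
  let B : AffineBasis (Fin 3) ℝ Pl := ⟨![u, w, y], hp, htop⟩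
  have hsum : (Finset.univ.sum ![a, b, c]) = 1 := by simp [Fin.sum_univ_three, habc]
  have hz : a • u + b • w + c • y
      = Finset.univ.affineCombination ℝ ![u, w, y] ![a, b, c] := by
    rw [Finset.affineCombination_eq_linear_combination _ _ _ hsum]
    simp [Fin.sum_univ_three]
  have hmem : a • u + b • w + c • y ∈ interior (convexHull ℝ (Set.range ![u, w, y])) := by
    have hBc : ⇑B = ![u, w, y] := rfl
    rw [← hBc, B.interior_convexHull]
    intro i
    have : B.coord i (a • u + b • w + c • y) = ![a, b, c] i := by
      rw [hz]
      exact B.coord_apply_combination_of_mem (Finset.mem_univ i) hsum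
    rw [this]
    fin_cases i <;> simpa
  refine interior_mono (convexHull_min ?_ hK) hmem
  intro z hz
  rcases hz with ⟨i, rfl⟩
  fin_cases i <;> assumption

lemma exit_collinear {K : Set Pl} (hK : Convex ℝ K) (hcl : IsClosed K) {u w x y : Pl}
    (hu : u ∈ K) (hw : w ∈ K) (hx : x ∈ openSegment ℝ u w)
    (hs : segment ℝ x y ⊆ frontier K) : Collinear ℝ ({u, w, y} : Set Pl) := by
  by_contra hncol
  have hy : y ∈ K := by
    have := hs (right_mem_segment ℝ x y)
    exact hcl.closure_eq ▸ frontier_subset_closure this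
  obtain ⟨a, b, ha, hb, hab, hxe⟩ := hx
  have hz : ((1:ℝ)/2) • x + ((1:ℝ)/2) • y ∈ frontier K := by
    apply hs
    exact ⟨1/2, 1/2, by norm_num, by norm_num, by norm_num, rfl⟩
  have hzi : ((1:ℝ)/2) • x + ((1:ℝ)/2) • y ∈ interior K := by
    have he : ((1:ℝ)/2) • x + ((1:ℝ)/2) • y = (a/2) • u + (b/2) • w + (1/2 : ℝ) • y := by
      rw [← hxe]; module
    rw [he]
    exact mem_interior_of_combo hK hu hw hy hncol (by linarith) (by linarith) (by norm_num)
      (by linarith)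
  rw [frontier, mem_diff] at hz
  exact hz.2 hzi

lemma collinear_param {u w y : Pl} (huw : u ≠ w) (h : Collinear ℝ ({u, w, y} : Set Pl)) :
    ∃ r : ℝ, y = u + r • (w - u) := by
  rw [collinear_iff_of_mem (Set.mem_insert u _)] at h
  obtain ⟨v, hv⟩ := h
  obtain ⟨rw', hw'⟩ := hv w (by simp)
  obtain ⟨ry, hy'⟩ := hv y (by simp)
  have hrw : rw' ≠ 0 := by
    rintro rfl
    simp at hw'
    exact huw hw'.symm
  refine ⟨ry / rw', ?_⟩
  have h1 : w - u = rw' • v := by rw [hw']; simp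
  rw [hy', h1, smul_smul, div_mul_cancel₀ _ hrw]
  simp [add_comm]

lemma vtx_congr {L : List Pl} {i j : ℕ} (h : i % L.length = j % L.length) :
    vtx L i = vtx L j := by unfold vtx; rw [h]

lemma vtx_mod (L : List Pl) (j : ℕ) : vtx L (j % L.length) = vtx L j :=
  vtx_congr (Nat.mod_mod_of_dvd _ dvd_rfl)

lemma vtx_add_length (L : List Pl) (j : ℕ) : vtx L (j + L.length) = vtx L j :=
  vtx_congr (by rw [Nat.add_mod_right])

lemma vtx_eq_getElem {L : List Pl} (h : 0 < L.length) (j : ℕ) :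
    vtx L j = L[j % L.length]'(Nat.mod_lt _ h) := by
  unfold vtx
  exact List.getD_eq_getElem L 0 (Nat.mod_lt _ h)

lemma vtx_mem {L : List Pl} (h : 0 < L.length) (j : ℕ) : vtx L j ∈ vertexSet L := by
  rw [vtx_eq_getElem h]
  exact List.getElem_mem _

lemma vtx_inj {L : List Pl} (hord : L.Nodup) (h0 : 0 < L.length) {i j : ℕ}
    (h : vtx L i = vtx L j) : i % L.length = j % L.length := by
  rw [vtx_eq_getElem h0, vtx_eq_getElem h0] at h
  exact (List.Nodup.getElem_inj_iff hord).1 h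

lemma edge_sub {L : List Pl} (h0 : 0 < L.length) (j : ℕ) :
    segment ℝ (vtx L j) (vtx L (j + 1)) ⊆ edg L := by
  have h1 : vtx L j = vtx L (j % L.length) := (vtx_mod L j).symm
  have h2 : vtx L (j + 1) = vtx L (j % L.length + 1) := by
    apply vtx_congr
    exact (Nat.ModEq.add_right 1 (Nat.mod_modEq j L.length)).symm
  rw [h1, h2]
  exact Set.subset_biUnion_of_mem (u := fun i => segment ℝ (vtx L i) (vtx L (i+1)))
    (Finset.mem_range.2 (Nat.mod_lt _ h0))

lemma exists_vtx_index {L : List Pl} {x : Pl} (hx : x ∈ vertexSet L) :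
    ∃ i, i < L.length ∧ vtx L i = x := by
  obtain ⟨i, hi, rfl⟩ := List.mem_iff_getElem.1 hx
  refine ⟨i, hi, ?_⟩
  rw [vtx_eq_getElem (by omega)]
  congr 1
  exact Nat.mod_eq_of_lt hi

/-- in an ordinary quasi-convex polygon of dimension 2, if `V_1` is an
extreme point of the convex hull, then `V_0, V_1, V_2` are non-collinear. -/
theorem stmt_17 (L : List Pl) (hord : L.Nodup) (hqc : IsQuasiConvex L)
    (hdim : Module.finrank ℝ (affineSpan ℝ (vertexSet L)).direction = 2)
    (hext : vtx L 1 ∈ Set.extremePoints ℝ (convexHull ℝ (vertexSet L))) :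
    ¬ Collinear ℝ ({vtx L 0, vtx L 1, vtx L 2} : Set Pl) := by
  intro hcol
  classical
  set K := convexHull ℝ (vertexSet L) with hKdef
  have hfin : (vertexSet L).Finite := L.finite_toSet
  have hKcomp : IsCompact K := hfin.isCompact_convexHull (𝕜 := ℝ)
  have hKconv : Convex ℝ K := convex_convexHull ℝ _
  have hKcl : IsClosed K := hKcomp.isClosed
  have hsubK : vertexSet L ⊆ K := subset_convexHull ℝ _
  have hncolV : ¬ Collinear ℝ (vertexSet L) := by
    intro h
    have h2 : Module.finrank ℝ (vectorSpan ℝ (vertexSet L)) ≤ 1 :=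
      Module.finrank_le_of_rank_le (by exact_mod_cast h)
    rw [direction_affineSpan] at hdim
    omega
  have hn3 : 3 ≤ L.length := by
    by_contra hn
    push_neg at hn
    apply hncolV
    apply Collinear.subset ?_ (collinear_pair ℝ (vtx L 0) (vtx L 1))
    intro x hx
    obtain ⟨i, hi, rfl⟩ := exists_vtx_index hx
    have hi2 : i = 0 ∨ i = 1 := by omega
    rcases hi2 with rfl | rfl
    · exact Set.mem_insert _ _
    · exact Set.mem_insert_of_mem _ rfl
  have h0 : 0 < L.length := by omega
  have hV0V1 : vtx L 0 ≠ vtx L 1 := by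
    intro h
    have := vtx_inj hord h0 h
    rw [Nat.mod_eq_of_lt (by omega), Nat.mod_eq_of_lt (by omega)] at this
    omega
  set d : Pl := vtx L 0 - vtx L 1 with hd
  have hdne : d ≠ 0 := sub_ne_zero.2 hV0V1
  set φ : ℝ → Pl := fun t => vtx L 1 + t • d with hφ
  have hφ0 : φ 0 = vtx L 1 := by simp [hφ]
  have hφ1 : φ 1 = vtx L 0 := by simp [hφ, hd]
  have hφinj : Function.Injective φ := by
    intro a b hab
    simp only [hφ, add_right_inj] at hab
    have : (a - b) • d = 0 := by rw [sub_smul, hab, sub_self]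
    rcases smul_eq_zero.1 this with h | h
    · linarith [sub_eq_zero.1 (by exact_mod_cast h)]
    · exact absurd h hdne
  have hφaff : ∀ a b s t : ℝ, a + b = 1 → a • φ s + b • φ t = φ (a*s + b*t) := by
    intro a b s t hab
    simp only [hφ]
    have h1 : a • (vtx L 1 + s • d) + b • (vtx L 1 + t • d)
        = (a + b) • vtx L 1 + (a*s + b*t) • d := by module
    rw [h1, hab, one_smul]
  -- V2 on the line
  have hV2 : ∃ s, φ s = vtx L 2 := by
    rw [collinear_iff_of_mem (show vtx L 1 ∈ ({vtx L 0, vtx L 1, vtx L 2} : Set Pl) by simp)]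
      at hcol
    obtain ⟨v, hv⟩ := hcol
    obtain ⟨r0, h0'⟩ := hv (vtx L 0) (by simp)
    obtain ⟨r2, h2'⟩ := hv (vtx L 2) (by simp)
    have hr0 : r0 ≠ 0 := by
      rintro rfl
      simp at h0'
      exact hV0V1 h0'
    have hdv : d = r0 • v := by rw [hd, h0']; simp
    refine ⟨r2 / r0, ?_⟩
    simp only [hφ, hdv, smul_smul, div_mul_cancel₀ _ hr0, h2']
    simp [add_comm]
  obtain ⟨s2, hs2φ⟩ := hV2
  -- the parameter set
  set S : Set ℝ := {t | φ t ∈ K} with hS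
  have hScl : IsClosed S := by
    have hc : Continuous φ := by
      rw [hφ]; exact continuous_const.add (continuous_id.smul continuous_const)
    exact IsClosed.preimage hc hKcl
  have hSbd : Bornology.IsBounded S := by
    obtain ⟨R, hR⟩ := hKcomp.isBounded.subset_closedBall (0 : Pl)
    have hd0 : (0:ℝ) < ‖d‖ := norm_pos_iff.2 hdne
    apply (Metric.isBounded_Icc (-((R + ‖vtx L 1‖)/‖d‖)) ((R + ‖vtx L 1‖)/‖d‖)).subset
    intro t ht
    have h1 : ‖φ t‖ ≤ R := by
      have := hR ht
      rwa [Metric.mem_closedBall, dist_zero_right] at this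
    have h2 : ‖t • d‖ ≤ R + ‖vtx L 1‖ := by
      have he : t • d = φ t - vtx L 1 := by simp [hφ]
      rw [he]
      calc ‖φ t - vtx L 1‖ ≤ ‖φ t‖ + ‖vtx L 1‖ := norm_sub_le _ _
        _ ≤ R + ‖vtx L 1‖ := by linarith
    rw [norm_smul, Real.norm_eq_abs] at h2
    have : |t| ≤ (R + ‖vtx L 1‖)/‖d‖ := (le_div_iff₀ hd0).2 h2
    exact abs_le.1 this
  have hScomp : IsCompact S := Metric.isCompact_of_isClosed_isBounded hScl hSbd
  have h0S : (0:ℝ) ∈ S := by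
    show φ 0 ∈ K
    rw [hφ0]; exact hsubK (vtx_mem h0 1)
  have h1S : (1:ℝ) ∈ S := by
    show φ 1 ∈ K
    rw [hφ1]; exact hsubK (vtx_mem h0 0)
  obtain ⟨m, hmS, hmlb⟩ := hScomp.exists_isLeast ⟨0, h0S⟩
  obtain ⟨M, hMS, hMub⟩ := hScomp.exists_isGreatest ⟨0, h0S⟩
  have hm0 : m ≤ 0 := hmlb h0S
  have hM1 : 1 ≤ M := hMub h1S
  have hmM : m < M := by linarith
  -- V1 extreme : 0 is an endpoint of [m, M]
  have hends : m = 0 ∨ M = 0 := by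
    by_contra hne
    push_neg at hne
    have hmlt : m < 0 := lt_of_le_of_ne hm0 hne.1
    have hMgt : 0 < M := by linarith
    have hmem : vtx L 1 ∈ openSegment ℝ (φ m) (φ M) := by
      have hsum1 : M/(M-m) + (-m)/(M-m) = 1 := by
        rw [← add_div, show M + -m = M - m by ring]
        exact div_self (by linarith)
      refine ⟨M/(M-m), (-m)/(M-m), div_pos hMgt (by linarith),
        div_pos (by linarith) (by linarith), hsum1, ?_⟩
      rw [hφaff _ _ _ _ hsum1]
      have he : M/(M-m)*m + (-m)/(M-m)*M = 0 := by
        rw [div_mul_eq_mul_div, div_mul_eq_mul_div, ← add_div, div_eq_zero_iff]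
        left; ring
      rw [he, hφ0]
    obtain ⟨hA, _⟩ := (mem_extremePoints.1 hext).2 _ hmS _ hMS hmem
    exact hne.1 (hφinj (hA.trans hφ0.symm))
  -- specialized exit lemma
  have exitR : ∀ s y, m < s → s < M → segment ℝ (φ s) y ⊆ frontier K → y ∈ Set.range φ := by
    intro s y hms hsM hsegf
    have hx : φ s ∈ openSegment ℝ (φ m) (φ M) := by
      have hsum1 : (M-s)/(M-m) + (s-m)/(M-m) = 1 := by
        rw [← add_div, show M - s + (s - m) = M - m by ring]
        exact div_self (by linarith)
      refine ⟨(M-s)/(M-m), (s-m)/(M-m), div_pos (by linarith) (by linarith),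
        div_pos (by linarith) (by linarith), hsum1, ?_⟩
      rw [hφaff _ _ _ _ hsum1]
      have harg : (M-s)/(M-m)*m + (s-m)/(M-m)*M = s := by
        rw [div_mul_eq_mul_div, div_mul_eq_mul_div, ← add_div,
          div_eq_iff (show M - m ≠ 0 by linarith)]
        ring
      rw [harg]
    have hcol3 := exit_collinear hKconv hKcl hmS hMS hx hsegf
    have hmMne : φ m ≠ φ M := fun h => (ne_of_lt hmM) (hφinj h)
    obtain ⟨r, hr⟩ := collinear_param hmMne hcol3
    refine ⟨m + r * (M - m), ?_⟩
    rw [hr]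
    simp only [hφ]
    module
  -- quasi-convexity: every (cyclic) edge lies in the frontier
  have hedge : ∀ j, segment ℝ (vtx L j) (vtx L (j+1)) ⊆ frontier K :=
    fun j => (edge_sub h0 j).trans hqc
  -- some vertex is off the line
  have hr0 : vtx L 0 ∈ Set.range φ := ⟨1, hφ1⟩
  have hr1 : vtx L 1 ∈ Set.range φ := ⟨0, hφ0⟩
  have hr2 : vtx L 2 ∈ Set.range φ := ⟨s2, hs2φ⟩
  have hoffex : ∃ i, i < L.length ∧ vtx L i ∉ Set.range φ := by
    by_contra hall
    push_neg at hall
    apply hncolV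
    rw [collinear_iff_of_mem (show vtx L 1 ∈ vertexSet L from vtx_mem h0 1)]
    refine ⟨d, fun p hp => ?_⟩
    obtain ⟨i, hi, rfl⟩ := exists_vtx_index hp
    obtain ⟨t, ht⟩ := hall i hi
    exact ⟨t, by rw [← ht]; simp [hφ, add_comm]⟩
  obtain ⟨i0, hi0n, hi0off⟩ := hoffex
  have hi03 : 3 ≤ i0 := by
    by_contra hlt
    push_neg at hlt
    interval_cases i0
    · exact hi0off hr0
    · exact hi0off hr1
    · exact hi0off hr2
  -- vertices whose parameter is an endpoint are not V1
  have hmem_vtx : ∀ j, vtx L j ∈ K := fun j => hsubK (vtx_mem h0 j)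
  -- FORWARD chain
  have hPex : ∃ j, vtx L (2 + j) ∉ Set.range φ := by
    refine ⟨i0 + L.length - 2, ?_⟩
    have he : 2 + (i0 + L.length - 2) = i0 + L.length := by omega
    rw [he, vtx_add_length]
    exact hi0off
  set jF := Nat.find hPex with hjFdef
  have hjFspec : vtx L (2 + jF) ∉ Set.range φ := Nat.find_spec hPex
  have hjFmin : ∀ j, j < jF → vtx L (2 + j) ∈ Set.range φ := fun j hj =>
    not_not.1 (Nat.find_min hPex hj)
  have hjF1 : 1 ≤ jF := by
    rcases Nat.eq_zero_or_pos jF with h | h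
    · exfalso; apply hjFspec; rw [h]; exact hr2
    · exact h
  have hjFn : jF < L.length := by
    by_contra hge
    push_neg at hge
    apply hi0off
    have hj : (i0 + L.length - 2) % L.length < jF :=
      lt_of_lt_of_le (Nat.mod_lt _ h0) hge
    have hmem := hjFmin _ hj
    have he : vtx L (2 + (i0 + L.length - 2) % L.length) = vtx L i0 := by
      apply vtx_congr
      have h1 : (2 + (i0 + L.length - 2) % L.length) % L.length
          = (2 + (i0 + L.length - 2)) % L.length :=
        Nat.ModEq.add_left 2 (Nat.mod_modEq _ L.length)
      rw [h1]
      have h2 : 2 + (i0 + L.length - 2) = i0 + L.length := by omega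
      rw [h2, Nat.add_mod_right]
    rwa [he] at hmem
  obtain ⟨sA, hsA⟩ : vtx L (1 + jF) ∈ Set.range φ := by
    have he : 2 + (jF - 1) = 1 + jF := by omega
    rw [← he]
    exact hjFmin _ (by omega)
  have hsAS : sA ∈ S := by
    show φ sA ∈ K
    rw [hsA]; exact hmem_vtx _
  have hsegF : segment ℝ (φ sA) (vtx L (2 + jF)) ⊆ frontier K := by
    rw [hsA]
    have he : (1 + jF) + 1 = 2 + jF := by omega
    rw [← he]
    exact hedge (1 + jF)
  have hsAend : sA = m ∨ sA = M := by
    by_contra hne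
    push_neg at hne
    exact hjFspec (exitR sA _ (lt_of_le_of_ne (hmlb hsAS) (Ne.symm hne.1))
      (lt_of_le_of_ne (hMub hsAS) hne.2) hsegF)
  have hsAne0 : sA ≠ 0 := by
    intro h
    have he : vtx L (1 + jF) = vtx L 1 := by rw [← hsA, h, hφ0]
    have hmod := vtx_inj hord h0 he
    rw [Nat.mod_eq_of_lt (show 1 < L.length by omega)] at hmod
    rcases Nat.lt_or_ge (1 + jF) L.length with hlt | hge2
    · rw [Nat.mod_eq_of_lt hlt] at hmod; omega
    · have he2 : 1 + jF = L.length := by omega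
      rw [he2, Nat.mod_self] at hmod; omega
  -- BACKWARD chain
  have hQex : ∃ j, vtx L (2 * L.length - j) ∉ Set.range φ := by
    refine ⟨2 * L.length - i0, ?_⟩
    have he : 2 * L.length - (2 * L.length - i0) = i0 := by omega
    rw [he]
    exact hi0off
  set jB := Nat.find hQex with hjBdef
  have hjBspec : vtx L (2 * L.length - jB) ∉ Set.range φ := Nat.find_spec hQex
  have hjBmin : ∀ j, j < jB → vtx L (2 * L.length - j) ∈ Set.range φ := fun j hj =>
    not_not.1 (Nat.find_min hQex hj)
  have hjB1 : 1 ≤ jB := by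
    rcases Nat.eq_zero_or_pos jB with h | h
    · exfalso
      apply hjBspec
      rw [h, Nat.sub_zero]
      have he : vtx L (2 * L.length) = vtx L 0 := vtx_congr (by
        simp [Nat.mul_mod_left])
      rw [he]; exact hr0
    · exact h
  have hjBn : jB ≤ L.length - 1 := by
    by_contra hge
    push_neg at hge
    apply hi0off
    have hj : L.length - i0 < jB := by omega
    have hmem := hjBmin _ hj
    have he : vtx L (2 * L.length - (L.length - i0)) = vtx L i0 := by
      have h2 : 2 * L.length - (L.length - i0) = i0 + L.length := by omega
      rw [h2, vtx_add_length]
    rwa [he] at hmem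
  obtain ⟨sB, hsB⟩ : vtx L (2 * L.length - jB + 1) ∈ Set.range φ := by
    have he : 2 * L.length - (jB - 1) = 2 * L.length - jB + 1 := by omega
    rw [← he]
    exact hjBmin _ (by omega)
  have hsBS : sB ∈ S := by
    show φ sB ∈ K
    rw [hsB]; exact hmem_vtx _
  have hsegB : segment ℝ (φ sB) (vtx L (2 * L.length - jB)) ⊆ frontier K := by
    rw [hsB, segment_symm]
    exact hedge (2 * L.length - jB)
  have hsBend : sB = m ∨ sB = M := by
    by_contra hne
    push_neg at hne
    exact hjBspec (exitR sB _ (lt_of_le_of_ne (hmlb hsBS) (Ne.symm hne.1))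
      (lt_of_le_of_ne (hMub hsBS) hne.2) hsegB)
  have hsBne0 : sB ≠ 0 := by
    intro h
    have he : vtx L (2 * L.length - jB + 1) = vtx L 1 := by rw [← hsB, h, hφ0]
    have hmod := vtx_inj hord h0 he
    rw [Nat.mod_eq_of_lt (show 1 < L.length by omega)] at hmod
    have hk : 2 * L.length - jB + 1 = L.length + (L.length - jB + 1) := by omega
    rw [hk, Nat.add_mod_left] at hmod
    rcases Nat.lt_or_ge (L.length - jB + 1) L.length with hlt | hge2
    · rw [Nat.mod_eq_of_lt hlt] at hmod; omega
    · have he2 : L.length - jB + 1 = L.length := by omega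
      rw [he2, Nat.mod_self] at hmod; omega
  -- sA = sB
  have hsAB : sA = sB := by
    rcases hends with h | h
    · rcases hsAend with hA | hA
      · exact absurd (hA.trans h) hsAne0
      · rcases hsBend with hB | hB
        · exact absurd (hB.trans h) hsBne0
        · rw [hA, hB]
    · rcases hsAend with hA | hA
      · rcases hsBend with hB | hB
        · rw [hA, hB]
        · exact absurd (hB.trans h) hsBne0
      · exact absurd (hA.trans h) hsAne0
  -- the final contradiction
  have hvAB : vtx L (1 + jF) = vtx L (2 * L.length - jB + 1) := by
    rw [← hsA, ← hsB, hsAB]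
  have hmod := vtx_inj hord h0 hvAB
  by_cases hjB1' : jB = 1
  · -- then 1 + jF ≡ 0 (mod n), so jF = n - 1 and V_{2+jF} = V_1
    rw [hjB1'] at hmod
    have he : 2 * L.length - 1 + 1 = 2 * L.length := by omega
    rw [he, Nat.mul_mod_left] at hmod
    have hjFval : 1 + jF = L.length := by
      rcases Nat.lt_or_ge (1 + jF) L.length with hlt | hge2
      · rw [Nat.mod_eq_of_lt hlt] at hmod; omega
      · omega
    apply hjFspec
    have he2 : vtx L (2 + jF) = vtx L 1 := by
      apply vtx_congr
      have h1 : 2 + jF = L.length + 1 := by omega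
      rw [h1, Nat.add_mod_left, Nat.mod_eq_of_lt (show 1 < L.length by omega)]
    rw [he2]; exact hr1
  · -- jB ≥ 2
    have hjB2 : 2 ≤ jB := by omega
    have hk : (2 * L.length - jB + 1) % L.length = L.length - jB + 1 := by
      have h1 : 2 * L.length - jB + 1 = L.length + (L.length - jB + 1) := by omega
      rw [h1, Nat.add_mod_left, Nat.mod_eq_of_lt (by omega)]
    rw [hk] at hmod
    have hjFval : 1 + jF = L.length - jB + 1 := by
      rcases Nat.lt_or_ge (1 + jF) L.length with hlt | hge2
      · rw [Nat.mod_eq_of_lt hlt] at hmod; omega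
      · have he2 : 1 + jF = L.length := by omega
        rw [he2, Nat.mod_self] at hmod; omega
    apply hjFspec
    have he : vtx L (2 + jF) = vtx L (2 * L.length - (jB - 2)) := by
      apply vtx_congr
      have e1 : 2 + jF = L.length - jB + 2 := by omega
      have e2 : 2 * L.length - (jB - 2) = L.length + (L.length - jB + 2) := by omega
      rw [e1, e2, Nat.add_mod_left]
    rw [he]
    exact hjBmin _ (by omega)
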